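/- In Z[X], a polynomial P = Σ a_j X^j belongs to the subgroup H = 2·Z[X] + ⟨X^n − X^m : n,m both prime or both non-prime⟩ if and only if both Σ_{j prime} a_j and Σ_{j non-prime} a_j are even. -/

import Mathlib

open Polynomial Finset

private def Hset : Set (Polynomial ℤ) :=
  {p : Polynomial ℤ | ∃ q : Polynomial ℤ, p = 2 * q} ∪
  {p : Polynomial ℤ | ∃ n m : ℕ, (n.Prime ↔ m.Prime) ∧ p = X ^ n - X ^ m}

private noncomputable def phi (pr : ℕ → Prop) [DecidablePred pr] : Polynomial ℤ →+ ZMod 2 :=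
  (Finsupp.liftAddHom (fun j => if pr j then Int.castAddHom (ZMod 2) else 0)).comp
    (AddMonoidAlgebra.coeffAddEquiv.toAddMonoidHom.comp
      (Polynomial.toFinsuppIso ℤ).toAddEquiv.toAddMonoidHom)

private lemma phi_apply (pr : ℕ → Prop) [DecidablePred pr] (Q : Polynomial ℤ) :
    phi pr Q = ∑ j ∈ Q.support.filter pr, (Q.coeff j : ZMod 2) := by
  show (Finsupp.liftAddHom _) Q.toFinsupp.coeff = _
  rw [Finsupp.liftAddHom_apply, Finsupp.sum, Finset.sum_filter]
  apply Finset.sum_congr rfl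
  intro j _
  by_cases h : pr j <;> simp [h, Polynomial.coeff]

private lemma phi_ker (pr : ℕ → Prop) [DecidablePred pr]
    (hpr : ∀ n m : ℕ, (n.Prime ↔ m.Prime) → (pr n ↔ pr m))
    (P : Polynomial ℤ) (hP : P ∈ AddSubgroup.closure Hset) :
    (∑ j ∈ P.support.filter pr, (P.coeff j : ZMod 2)) = 0 := by
  rw [← phi_apply]
  have hle : AddSubgroup.closure Hset ≤ (phi pr).ker := by
    rw [AddSubgroup.closure_le]
    rintro p (⟨q, rfl⟩ | ⟨n, m, hnm, rfl⟩)
    · simp only [AddMonoidHom.mem_ker, SetLike.mem_coe]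
      rw [two_mul, map_add]
      exact CharTwo.add_self_eq_zero _
    · simp only [AddMonoidHom.mem_ker, SetLike.mem_coe, map_sub]
      have hx : ∀ k : ℕ, phi pr (X ^ k : Polynomial ℤ) = if pr k then 1 else 0 := by
        intro k
        rw [phi_apply]
        simp [Polynomial.support_X_pow, Finset.filter_singleton]
        by_cases h : pr k <;> simp [h]
      rw [hx, hx]
      rcases hpr n m hnm with h
      by_cases hn : pr n
      · rw [if_pos hn, if_pos (h.mp hn)]; ring
      · rw [if_neg hn, if_neg (fun hm => hn (h.mpr hm))]; ring
  exact hle hP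

private lemma even_of_cast (s : ℤ) (h : ((s : ZMod 2) = 0)) : Even s := by
  obtain ⟨t, ht⟩ := (ZMod.intCast_zmod_eq_zero_iff_dvd s 2).mp h
  exact ⟨t, by omega⟩

/-- A polynomial P ∈ Z[X] belongs to
H = 2·Z[X] + ⟨X^n − X^m : n,m both prime or both non-prime⟩ iff the sum of its
coefficients at prime exponents and the sum at non-prime exponents are both even. -/
theorem stmt_9 (P : Polynomial ℤ) :
    P ∈ AddSubgroup.closure
        ({p : Polynomial ℤ | ∃ q : Polynomial ℤ, p = 2 * q} ∪
         {p : Polynomial ℤ | ∃ n m : ℕ, (n.Prime ↔ m.Prime) ∧ p = X ^ n - X ^ m}) ↔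
      (Even (∑ j ∈ P.support.filter (fun j => j.Prime), P.coeff j) ∧
       Even (∑ j ∈ P.support.filter (fun j => ¬ j.Prime), P.coeff j)) := by
  have hHset : ({p : Polynomial ℤ | ∃ q : Polynomial ℤ, p = 2 * q} ∪
         {p : Polynomial ℤ | ∃ n m : ℕ, (n.Prime ↔ m.Prime) ∧ p = X ^ n - X ^ m}) = Hset := rfl
  rw [hHset]
  constructor
  · intro h
    constructor
    · apply even_of_cast
      have := phi_ker (fun j => j.Prime) (fun n m h => h) P h
      rw [← this]
      push_cast
      rfl
    · apply even_of_cast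
      have := phi_ker (fun j => ¬ j.Prime) (fun n m h => not_congr h) P h
      rw [← this]
      push_cast
      rfl
  · rintro ⟨hp, hn⟩
    set H := AddSubgroup.closure Hset
    -- exponent reduction
    have hgen : ∀ n : ℕ, (X ^ n - X ^ (if n.Prime then 2 else 1) : Polynomial ℤ) ∈ H := by
      intro n
      apply AddSubgroup.subset_closure
      right
      refine ⟨n, if n.Prime then 2 else 1, ?_, rfl⟩
      by_cases h : n.Prime <;> simp [h, Nat.prime_two, Nat.not_prime_one]
    have hmon : ∀ (n : ℕ) (a : ℤ),
        ((monomial n a : Polynomial ℤ) - a • X ^ (if n.Prime then 2 else 1)) ∈ H := by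
      intro n a
      have : (monomial n a : Polynomial ℤ) - a • X ^ (if n.Prime then 2 else 1)
          = a • (X ^ n - X ^ (if n.Prime then 2 else 1)) := by
        rw [smul_sub]
        congr 1
        rw [Polynomial.smul_eq_C_mul, Polynomial.C_mul_X_pow_eq_monomial]
      rw [this]
      exact AddSubgroup.zsmul_mem H (hgen n) a
    have hsum : P - ∑ j ∈ P.support, (P.coeff j) • (X : Polynomial ℤ) ^ (if j.Prime then 2 else 1) ∈ H := by
      have hP : P = ∑ j ∈ P.support, (monomial j (P.coeff j) : Polynomial ℤ) :=
        P.as_sum_support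
      have key : P - ∑ j ∈ P.support, (P.coeff j) • (X : Polynomial ℤ) ^ (if j.Prime then 2 else 1)
          = ∑ j ∈ P.support, ((monomial j (P.coeff j) : Polynomial ℤ)
              - (P.coeff j) • X ^ (if j.Prime then 2 else 1)) := by
        rw [Finset.sum_sub_distrib, ← hP]
      rw [key]
      exact AddSubgroup.sum_mem H (fun j _ => hmon j (P.coeff j))
    have hsplit : (∑ j ∈ P.support, (P.coeff j) • (X : Polynomial ℤ) ^ (if j.Prime then 2 else 1))
        = (∑ j ∈ P.support.filter (fun j => j.Prime), P.coeff j) • (X : Polynomial ℤ) ^ 2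
          + (∑ j ∈ P.support.filter (fun j => ¬ j.Prime), P.coeff j) • (X : Polynomial ℤ) := by
      rw [← Finset.sum_filter_add_sum_filter_not P.support (fun j => j.Prime)]
      congr 1
      · rw [Finset.sum_smul]
        refine Finset.sum_congr rfl (fun j hj => ?_)
        rw [if_pos (Finset.mem_filter.mp hj).2]
      · rw [Finset.sum_smul]
        refine Finset.sum_congr rfl (fun j hj => ?_)
        rw [if_neg (Finset.mem_filter.mp hj).2, pow_one]
    have heven : ∀ (s : ℤ) (Q : Polynomial ℤ), Even s → s • Q ∈ H := by
      rintro s Q ⟨t, rfl⟩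
      apply AddSubgroup.subset_closure
      left
      exact ⟨t • Q, by rw [two_mul, add_smul]⟩
    have h1 : (∑ j ∈ P.support.filter (fun j => j.Prime), P.coeff j) • (X : Polynomial ℤ) ^ 2 ∈ H :=
      heven _ _ hp
    have h2 : (∑ j ∈ P.support.filter (fun j => ¬ j.Prime), P.coeff j) • (X : Polynomial ℤ) ∈ H :=
      heven _ _ hn
    have hQ : (∑ j ∈ P.support, (P.coeff j) • (X : Polynomial ℤ) ^ (if j.Prime then 2 else 1)) ∈ H := by
      rw [hsplit]; exact AddSubgroup.add_mem H h1 h2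
    simpa using AddSubgroup.add_mem H hsum hQ
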